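/- Let p be a positive rational with √p irrational, and let x₁ = a₁ + b₁√p, …, xₙ = aₙ + bₙ√p (n ≥ 2) with all aᵢ, bᵢ ∈ ℚ and all xᵢ > 0. Suppose aᵢ − bᵢ√p > 0 for all i. Then for every z = e + f√p > 0 with e, f ∈ ℚ, e > 0 and |f|/e < max_{1 ≤ i ≤ n} |bᵢ|/aᵢ, the rectangle of aspect ratio z admits a diverse tiling by rectangles with aspect ratios x₁, …, xₙ. -/

import Mathlib

/-- A tiling of the rectangle `[0,1] × [0,r]` by finitely many closed
axis-parallel rectangles with positive side lengths, covering the rectangle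
and having pairwise disjoint interiors. -/
structure RectTiling (r : ℝ) where
  m : ℕ
  px : Fin m → ℝ
  py : Fin m → ℝ
  w : Fin m → ℝ
  h : Fin m → ℝ
  w_pos : ∀ k, 0 < w k
  h_pos : ∀ k, 0 < h k
  cover : (Set.Icc (0:ℝ) 1 ×ˢ Set.Icc (0:ℝ) r) =
      ⋃ k, Set.Icc (px k) (px k + w k) ×ˢ Set.Icc (py k) (py k + h k)
  disj : ∀ k l, k ≠ l →
      Disjoint ((Set.Ioo (px k) (px k + w k)) ×ˢ (Set.Ioo (py k) (py k + h k)))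
               ((Set.Ioo (px l) (px l + w l)) ×ˢ (Set.Ioo (py l) (py l + h l)))

/-- Tile `k` of the tiling `T` has aspect ratio `x` (in one of the two orientations). -/
def RectTiling.ratioOK {r : ℝ} (T : RectTiling r) (k : Fin T.m) (x : ℝ) : Prop :=
  T.h k / T.w k = x ∨ T.w k / T.h k = x

/-- The rectangle of aspect ratio `r` is tileable by rectangles with aspect
ratios among `X`. -/
def Tileable (r : ℝ) {n : ℕ} (X : Fin n → ℝ) : Prop :=
  ∃ T : RectTiling r, ∀ k, ∃ i, T.ratioOK k (X i)

/-- The rectangle of aspect ratio `r` admits a *diverse* tiling by rectangles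
with aspect ratios `X 0, …, X (n-1)`: every tile has some ratio `X i`, and for
every `i` some tile has ratio `X i`. -/
def DiverselyTileable (r : ℝ) {n : ℕ} (X : Fin n → ℝ) : Prop :=
  ∃ T : RectTiling r, (∀ k, ∃ i, T.ratioOK k (X i)) ∧ (∀ i, ∃ k, T.ratioOK k (X i))

namespace RectTiling

variable {r : ℝ}

theorem tile_subset (T : RectTiling r) (k : Fin T.m) :
    Set.Icc (T.px k) (T.px k + T.w k) ×ˢ Set.Icc (T.py k) (T.py k + T.h k) ⊆
      Set.Icc (0:ℝ) 1 ×ˢ Set.Icc (0:ℝ) r := by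
  rw [T.cover]; exact Set.subset_iUnion (fun k => Set.Icc (T.px k) (T.px k + T.w k) ×ˢ Set.Icc (T.py k) (T.py k + T.h k)) k

theorem px_nonneg (T : RectTiling r) (k : Fin T.m) : 0 ≤ T.px k := by
  have := T.tile_subset k (Set.mk_mem_prod
    (Set.left_mem_Icc.2 (by linarith [T.w_pos k]))
    (Set.left_mem_Icc.2 (by linarith [T.h_pos k])))
  exact this.1.1

theorem py_nonneg (T : RectTiling r) (k : Fin T.m) : 0 ≤ T.py k := by
  have := T.tile_subset k (Set.mk_mem_prod
    (Set.left_mem_Icc.2 (by linarith [T.w_pos k]))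
    (Set.left_mem_Icc.2 (by linarith [T.h_pos k])))
  exact this.2.1

theorem px_add_w_le (T : RectTiling r) (k : Fin T.m) : T.px k + T.w k ≤ 1 := by
  have := T.tile_subset k (Set.mk_mem_prod
    (Set.right_mem_Icc.2 (by linarith [T.w_pos k]))
    (Set.right_mem_Icc.2 (by linarith [T.h_pos k])))
  exact this.1.2

theorem py_add_h_le (T : RectTiling r) (k : Fin T.m) : T.py k + T.h k ≤ r := by
  have := T.tile_subset k (Set.mk_mem_prod
    (Set.right_mem_Icc.2 (by linarith [T.w_pos k]))
    (Set.right_mem_Icc.2 (by linarith [T.h_pos k])))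
  exact this.2.2

end RectTiling

namespace RectTiling

variable {r r1 r2 : ℝ}

/-- The one-tile tiling of the `[0,1] × [0,x]` rectangle. -/
def single (x : ℝ) (hx : 0 < x) : RectTiling x where
  m := 1
  px := fun _ => 0
  py := fun _ => 0
  w := fun _ => 1
  h := fun _ => x
  w_pos := fun _ => one_pos
  h_pos := fun _ => hx
  cover := by
    rw [Set.iUnion_const]
    norm_num
  disj := by intro k l hkl; exact absurd (Subsingleton.elim k l) hkl

/-- Stacking a tiling of ratio `r1` below a tiling of ratio `r2`. -/
def stack (hr1 : 0 ≤ r1) (hr2 : 0 ≤ r2) (T1 : RectTiling r1) (T2 : RectTiling r2) :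
    RectTiling (r1 + r2) where
  m := T1.m + T2.m
  px := fun k => Sum.elim T1.px T2.px (finSumFinEquiv.symm k)
  py := fun k => Sum.elim T1.py (fun l => r1 + T2.py l) (finSumFinEquiv.symm k)
  w := fun k => Sum.elim T1.w T2.w (finSumFinEquiv.symm k)
  h := fun k => Sum.elim T1.h T2.h (finSumFinEquiv.symm k)
  w_pos := fun k => by
    rcases h : finSumFinEquiv.symm k with l | l <;> simp [h, T1.w_pos, T2.w_pos]
  h_pos := fun k => by
    rcases h : finSumFinEquiv.symm k with l | l <;> simp [h, T1.h_pos, T2.h_pos]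
  cover := by
    have key := Function.Surjective.iUnion_comp (f := finSumFinEquiv.symm)
      finSumFinEquiv.symm.surjective
      (g := fun s : Fin T1.m ⊕ Fin T2.m =>
        Set.Icc (Sum.elim T1.px T2.px s) (Sum.elim T1.px T2.px s + Sum.elim T1.w T2.w s) ×ˢ
        Set.Icc (Sum.elim T1.py (fun l => r1 + T2.py l) s)
          (Sum.elim T1.py (fun l => r1 + T2.py l) s + Sum.elim T1.h T2.h s))
    rw [key, Set.iUnion_sum]
    simp only [Sum.elim_inl, Sum.elim_inr]
    have split : Set.Icc (0:ℝ) (r1 + r2) = Set.Icc 0 r1 ∪ Set.Icc r1 (r1+r2) :=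
      (Set.Icc_union_Icc_eq_Icc hr1 (by linarith)).symm
    rw [split, Set.prod_union, T1.cover]
    congr 1
    ext ⟨u, v⟩
    have hiff := Set.ext_iff.1 T2.cover (u, v - r1)
    simp only [Set.mem_prod, Set.mem_Icc, Set.mem_iUnion, Prod.fst, Prod.snd] at hiff ⊢
    constructor
    · rintro ⟨hu, hv1, hv2⟩
      obtain ⟨k, hk⟩ := hiff.1 ⟨hu, by linarith, by linarith⟩
      exact ⟨k, ⟨hk.1.1, hk.1.2⟩, by linarith [hk.2.1], by linarith [hk.2.2]⟩
    · rintro ⟨k, hk1, hk2, hk3⟩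
      have h2 := hiff.2 ⟨k, hk1, by linarith, by linarith⟩
      refine ⟨h2.1, by linarith [T2.py_nonneg k], by linarith [h2.2.2]⟩
  disj := by
    intro k l hkl
    have hne : finSumFinEquiv.symm k ≠ finSumFinEquiv.symm l :=
      fun h => hkl (finSumFinEquiv.symm.injective h)
    rcases hs1 : finSumFinEquiv.symm k with k1 | k1 <;> rcases hs2 : finSumFinEquiv.symm l with l1 | l1 <;>
      simp only [hs1, hs2, Sum.elim_inl, Sum.elim_inr]
    · exact T1.disj k1 l1 (by rintro rfl; exact hne (hs1.trans hs2.symm))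
    · rw [Set.disjoint_left]
      rintro ⟨u, v⟩ h1 h3
      simp only [Set.mem_prod, Set.mem_Ioo] at h1 h3
      have := T1.py_add_h_le k1
      have := T2.py_nonneg l1
      linarith [h1.2.2, h3.2.1]
    · rw [Set.disjoint_left]
      rintro ⟨u, v⟩ h1 h3
      simp only [Set.mem_prod, Set.mem_Ioo] at h1 h3
      have := T1.py_add_h_le l1
      have := T2.py_nonneg k1
      linarith [h1.2.1, h3.2.2]
    · have h2 := T2.disj k1 l1 (by rintro rfl; exact hne (hs1.trans hs2.symm))
      rw [Set.disjoint_left] at h2 ⊢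
      rintro ⟨u, v⟩ h1 h3
      simp only [Set.mem_prod, Set.mem_Ioo] at h1 h3
      refine h2 (a := (u, v - r1)) ?_ ?_ <;>
        simp only [Set.mem_prod, Set.mem_Ioo] <;>
        exact ⟨⟨by linarith [h1.1.1, h3.1.1], by linarith [h1.1.2, h3.1.2]⟩,
          by constructor <;>
            linarith [h1.2.1, h1.2.2, h3.2.1, h3.2.2]⟩

end RectTiling

namespace RectTiling

variable {r : ℝ}

/-- Transposing (rotating by 90°) and rescaling a tiling. -/
noncomputable def transpose (hr : 0 < r) (T : RectTiling r) : RectTiling (1/r) where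
  m := T.m
  px := fun k => T.py k / r
  py := fun k => T.px k / r
  w := fun k => T.h k / r
  h := fun k => T.w k / r
  w_pos := fun k => div_pos (T.h_pos k) hr
  h_pos := fun k => div_pos (T.w_pos k) hr
  cover := by
    have hd : ∀ x y : ℝ, x / r ≤ y ↔ x ≤ r * y := fun x y => by
      rw [div_le_iff₀ hr, mul_comm]
    have hd2 : ∀ x y : ℝ, y ≤ x / r ↔ r * y ≤ x := fun x y => by
      rw [le_div_iff₀ hr, mul_comm]
    ext ⟨u, v⟩
    have hiff := Set.ext_iff.1 T.cover (r * v, r * u)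
    simp only [Set.mem_prod, Set.mem_Icc, Set.mem_iUnion] at hiff ⊢
    simp only [← add_div, hd, hd2]
    constructor
    · rintro ⟨⟨hu0, hu1⟩, hv0, hv1⟩
      obtain ⟨k, h1, h2⟩ := hiff.1 ⟨⟨by positivity, hv1⟩, by positivity, by nlinarith⟩
      exact ⟨k, h2, h1⟩
    · rintro ⟨k, h1, h2⟩
      have h3 := hiff.2 ⟨k, h2, h1⟩
      obtain ⟨⟨hv0, hv1⟩, hu0, hu1⟩ := h3
      refine ⟨⟨by nlinarith, by nlinarith⟩, by nlinarith, hv1⟩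
  disj := by
    intro k l hkl
    have h2 := T.disj k l hkl
    rw [Set.disjoint_left] at h2 ⊢
    have hd : ∀ x y : ℝ, x / r < y ↔ x < r * y := fun x y => by
      rw [div_lt_iff₀ hr, mul_comm]
    have hd2 : ∀ x y : ℝ, y < x / r ↔ r * y < x := fun x y => by
      rw [lt_div_iff₀ hr, mul_comm]
    rintro ⟨u, v⟩ h1 h3
    simp only [Set.mem_prod, Set.mem_Ioo, ← add_div, hd, hd2] at h1 h3
    exact h2 (a := (r * v, r * u)) ⟨⟨h1.2.1, h1.2.2⟩, h1.1.1, h1.1.2⟩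
      ⟨⟨h3.2.1, h3.2.2⟩, h3.1.1, h3.1.2⟩

end RectTiling

namespace RectTiling

/-- dimension predicate: tile of width `w`, height `h` has aspect ratio `x`. -/
def rQ (x w h : ℝ) : Prop := h / w = x ∨ w / h = x

theorem cast_ex {r r' : ℝ} (h : r = r') {Q : ℝ → ℝ → Prop}
    (H : ∃ T : RectTiling r, 0 < T.m ∧ ∀ k, Q (T.w k) (T.h k)) :
    ∃ T : RectTiling r', 0 < T.m ∧ ∀ k, Q (T.w k) (T.h k) := by subst h; exact H

theorem stack_spec {r1 r2 : ℝ} (hr1 : 0 ≤ r1) (hr2 : 0 ≤ r2)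
    (T1 : RectTiling r1) (T2 : RectTiling r2) :
    ∃ T : RectTiling (r1 + r2), T.m = T1.m + T2.m ∧
      (∀ k, (∃ k1, T.w k = T1.w k1 ∧ T.h k = T1.h k1) ∨
            (∃ k2, T.w k = T2.w k2 ∧ T.h k = T2.h k2)) ∧
      (∀ k1, ∃ k, T.w k = T1.w k1 ∧ T.h k = T1.h k1) ∧
      (∀ k2, ∃ k, T.w k = T2.w k2 ∧ T.h k = T2.h k2) := by
  refine ⟨stack hr1 hr2 T1 T2, rfl, ?_, ?_, ?_⟩
  · intro k
    rcases hs : finSumFinEquiv.symm k with k1 | k1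
    · exact Or.inl ⟨k1, by simp [stack, hs]⟩
    · exact Or.inr ⟨k1, by simp [stack, hs]⟩
  · intro k1
    exact ⟨finSumFinEquiv (Sum.inl k1), by simp [stack]⟩
  · intro k2
    exact ⟨finSumFinEquiv (Sum.inr k2), by simp [stack]⟩

theorem stack_ex {r1 r2 : ℝ} (hr1 : 0 < r1) (hr2 : 0 < r2) {Q : ℝ → ℝ → Prop}
    (h1 : ∃ T : RectTiling r1, 0 < T.m ∧ ∀ k, Q (T.w k) (T.h k))
    (h2 : ∃ T : RectTiling r2, 0 < T.m ∧ ∀ k, Q (T.w k) (T.h k)) :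
    ∃ T : RectTiling (r1 + r2), 0 < T.m ∧ ∀ k, Q (T.w k) (T.h k) := by
  obtain ⟨T1, hm1, hQ1⟩ := h1
  obtain ⟨T2, hm2, hQ2⟩ := h2
  obtain ⟨T, hm, hall, -, -⟩ := stack_spec hr1.le hr2.le T1 T2
  refine ⟨T, by omega, fun k => ?_⟩
  rcases hall k with ⟨k1, hw, hh⟩ | ⟨k2, hw, hh⟩
  · rw [hw, hh]; exact hQ1 k1
  · rw [hw, hh]; exact hQ2 k2

theorem rep_ex {r : ℝ} (hr : 0 < r) {Q : ℝ → ℝ → Prop}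
    (h : ∃ T : RectTiling r, 0 < T.m ∧ ∀ k, Q (T.w k) (T.h k)) :
    ∀ m : ℕ, 0 < m → ∃ T : RectTiling ((m : ℝ) * r), 0 < T.m ∧ ∀ k, Q (T.w k) (T.h k) := by
  intro m hm
  induction m with
  | zero => omega
  | succ m ih =>
    rcases Nat.eq_zero_or_pos m with rfl | hm'
    · exact cast_ex (by norm_num) h
    · have := stack_ex (by positivity) hr (ih hm') h
      exact cast_ex (by push_cast; ring) this

theorem transpose_ex {x r : ℝ} (hr : 0 < r)
    (h : ∃ T : RectTiling r, 0 < T.m ∧ ∀ k, rQ x (T.w k) (T.h k)) :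
    ∃ T : RectTiling (1/r), 0 < T.m ∧ ∀ k, rQ x (T.w k) (T.h k) := by
  obtain ⟨T, hm, hQ⟩ := h
  refine ⟨T.transpose hr, hm, fun k => ?_⟩
  have hwk := (T.w_pos k).ne'
  have hhk := (T.h_pos k).ne'
  have hr' := hr.ne'
  have e1 : (T.transpose hr).w k = T.h k / r := rfl
  have e2 : (T.transpose hr).h k = T.w k / r := rfl
  rw [e1, e2]
  have e3 : T.w k / r / (T.h k / r) = T.w k / T.h k := by field_simp
  have e4 : T.h k / r / (T.w k / r) = T.h k / T.w k := by field_simp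
  rcases hQ k with h5 | h5
  · exact Or.inr (by rw [e4, h5])
  · exact Or.inl (by rw [e3, h5])

theorem grid_ex (x : ℝ) (hx : 0 < x) (q : ℚ) (hq : 0 < q) :
    ∃ T : RectTiling ((q : ℝ) * x), 0 < T.m ∧ ∀ k, rQ x (T.w k) (T.h k) := by
  have hM : 0 < q.num.toNat := by
    have := Rat.num_pos.mpr hq; omega
  have hK : 0 < q.den := q.pos
  have h0 : ∃ T : RectTiling x, 0 < T.m ∧ ∀ k, rQ x (T.w k) (T.h k) := by
    refine ⟨single x hx, Nat.one_pos, fun k => Or.inl ?_⟩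
    show x / 1 = x
    simp
  have h1 := rep_ex hx h0 q.num.toNat hM
  have hMx : 0 < (q.num.toNat : ℝ) * x := by positivity
  have h2 := transpose_ex hMx h1
  have h3 := rep_ex (by positivity) h2 q.den hK
  have h4 := transpose_ex (r := (q.den : ℝ) * (1 / ((q.num.toNat : ℝ) * x))) (by positivity) h3
  refine cast_ex ?_ h4
  have hnum0 : (q.num.toNat : ℤ) = q.num := Int.toNat_of_nonneg (Rat.num_pos.mpr hq).le
  have hnum : ((q.num.toNat : ℕ) : ℝ) = ((q.num : ℤ) : ℝ) := by exact_mod_cast congrArg (fun z : ℤ => (z : ℝ)) hnum0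
  have hden : ((q.den : ℕ) : ℝ) ≠ 0 := by positivity
  have hx' : x ≠ 0 := hx.ne'
  have hnum' : ((q.num.toNat : ℕ) : ℝ) ≠ 0 := by positivity
  rw [hnum, Rat.cast_def]
  field_simp

end RectTiling

namespace RectTiling

theorem stack_family : ∀ (N : ℕ) (d : Fin (N+1) → ℝ) (Q : Fin (N+1) → ℝ → ℝ → Prop),
    (∀ i, 0 < d i) →
    (∀ i, ∃ T : RectTiling (d i), 0 < T.m ∧ ∀ k, Q i (T.w k) (T.h k)) →
    ∃ T : RectTiling (∑ i, d i),
      (∀ k, ∃ i, Q i (T.w k) (T.h k)) ∧ (∀ i, ∃ k, Q i (T.w k) (T.h k)) := by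
  intro N
  induction N with
  | zero =>
    intro d Q hd H
    have hs : ∑ i : Fin (0+1), d i = d 0 := Fin.sum_univ_one d
    rw [hs]
    obtain ⟨T, hm, hQ⟩ := H 0
    refine ⟨T, fun k => ⟨0, hQ k⟩, fun i => ?_⟩
    have : i = 0 := Fin.ext (by omega)
    subst this
    exact ⟨⟨0, hm⟩, hQ _⟩
  | succ N ih =>
    intro d Q hd H
    obtain ⟨T2, P2all, P2wit⟩ := ih (fun i => d i.succ) (fun i => Q i.succ)
      (fun i => hd i.succ) (fun i => H i.succ)
    obtain ⟨T1, hm1, hQ1⟩ := H 0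
    have hsum_pos : (0:ℝ) ≤ ∑ i : Fin (N+1), d i.succ :=
      (Finset.sum_pos (fun i _ => hd i.succ) Finset.univ_nonempty).le
    obtain ⟨T, -, hall, wit1, wit2⟩ := stack_spec (hd 0).le hsum_pos T1 T2
    rw [Fin.sum_univ_succ]
    refine ⟨T, fun k => ?_, fun i => ?_⟩
    · rcases hall k with ⟨k1, hw, hh⟩ | ⟨k2, hw, hh⟩
      · exact ⟨0, by rw [hw, hh]; exact hQ1 k1⟩
      · obtain ⟨i, hi⟩ := P2all k2
        exact ⟨i.succ, by rw [hw, hh]; exact hi⟩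
    · refine Fin.cases ?_ ?_ i
      · obtain ⟨k, hw, hh⟩ := wit1 ⟨0, hm1⟩
        exact ⟨k, by rw [hw, hh]; exact hQ1 _⟩
      · intro j
        obtain ⟨k2, hk2⟩ := P2wit j
        obtain ⟨k, hw, hh⟩ := wit2 k2
        exact ⟨k, by rw [hw, hh]; exact hk2⟩

end RectTiling


theorem RectTiling.rQ_one_div {x w h : ℝ} (hx : 0 < x) (hw : 0 < w) (hh : 0 < h) :
    RectTiling.rQ (1/x) w h → RectTiling.rQ x w h := by
  rintro (h1 | h1)
  · right
    rw [show w / h = (h / w)⁻¹ from (inv_div h w).symm, h1, one_div, inv_inv]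
  · left
    rw [show h / w = (w / h)⁻¹ from (inv_div w h).symm, h1, one_div, inv_inv]

set_option maxHeartbeats 1000000 in
open RectTiling in
theorem diverse_tiling_exists_pos_conj_case (p : ℚ) (hp : 0 < p)
    (hirr : Irrational (Real.sqrt p))
    (n : ℕ) (hn : 2 ≤ n) (a b : Fin n → ℚ) (X : Fin n → ℝ)
    (hX : ∀ i, X i = (a i : ℝ) + (b i : ℝ) * Real.sqrt p)
    (hXpos : ∀ i, 0 < X i)
    (hconj : ∀ i, 0 < (a i : ℝ) - (b i : ℝ) * Real.sqrt p)
    (e f : ℚ) (z : ℝ) (hz : z = (e : ℝ) + (f : ℝ) * Real.sqrt p) (hzpos : 0 < z)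
    (he : 0 < e)
    (hf : |f| / e < Finset.univ.sup' ⟨⟨0, by omega⟩, Finset.mem_univ _⟩
        (fun i => |b i| / a i)) :
    DiverselyTileable z X := by
  have hpR : (0:ℝ) < (p:ℝ) := by exact_mod_cast hp
  have hsq : (0:ℝ) < Real.sqrt p := Real.sqrt_pos.mpr hpR
  have hsqsq : Real.sqrt p * Real.sqrt p = (p:ℝ) := Real.mul_self_sqrt hpR.le
  -- positivity of the a i
  have ha : ∀ i, 0 < a i := by
    intro i
    have h1 := hXpos i
    rw [hX i] at h1
    have h2 := hconj i
    have : (0:ℝ) < (a i : ℝ) := by linarith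
    exact_mod_cast this
  -- the maximizing index
  obtain ⟨j, -, hj⟩ := Finset.exists_mem_eq_sup'
    (⟨⟨0, by omega⟩, Finset.mem_univ _⟩ : (Finset.univ : Finset (Fin n)).Nonempty)
    (fun i => |b i| / a i)
  rw [hj] at hf
  have hbj : b j ≠ 0 := by
    intro h0
    rw [h0] at hf
    simp at hf
    have : 0 ≤ |f| / e := div_nonneg (abs_nonneg f) he.le
    linarith
  have habj : 0 < |b j| := abs_pos.mpr hbj
  -- the conjugate norm
  set Nq : ℚ := a j ^ 2 - b j ^ 2 * p with hNqdef
  have hNqR : ((Nq:ℚ):ℝ) = X j * ((a j : ℝ) - (b j : ℝ) * Real.sqrt p) := by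
    rw [hNqdef, hX j]
    push_cast
    linear_combination ((b j:ℝ))^2 * hsqsq
  have hNqpos : 0 < Nq := by
    have : (0:ℝ) < ((Nq:ℚ):ℝ) := by
      rw [hNqR]; exact mul_pos (hXpos j) (hconj j)
    exact_mod_cast this
  -- epsilon and the coefficients
  set Sa : ℚ := ∑ i ∈ Finset.univ.erase j, a i with hSadef
  set Sb : ℚ := ∑ i ∈ Finset.univ.erase j, b i with hSbdef
  set δ : ℚ := e * |b j| - |f| * a j with hδdef
  have hδ : 0 < δ := by
    have := (div_lt_div_iff₀ he (ha j)).mp hf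
    rw [hδdef]; linarith
  set C : ℚ := |Sb| * a j + |Sa| * |b j| with hCdef
  have hCnn : 0 ≤ C := by
    rw [hCdef]
    exact add_nonneg (mul_nonneg (abs_nonneg _) (ha j).le)
      (mul_nonneg (abs_nonneg _) (abs_nonneg _))
  set ε : ℚ := δ / (2 * (C + 1)) with hεdef
  have hε : 0 < ε := by positivity
  have hmul : ε * (2 * (C + 1)) = δ := by
    rw [hεdef]; field_simp
  have hC1 : ε * C < δ := by nlinarith [mul_nonneg hε.le hCnn]
  have he' : ε * Sa < e := by
    have t1 : ε * |Sa| * |b j| < e * |b j| := by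
      nlinarith [mul_nonneg (mul_nonneg hε.le (abs_nonneg Sb)) (ha j).le,
        mul_nonneg (abs_nonneg f) (ha j).le]
    have t2 : ε * |Sa| < e := lt_of_mul_lt_mul_right t1 (abs_nonneg (b j))
    have t3 : ε * Sa ≤ ε * |Sa| := mul_le_mul_of_nonneg_left (le_abs_self Sa) hε.le
    linarith
  have key : |f - ε * Sb| * a j < (e - ε * Sa) * |b j| := by
    have h1 : |f - ε * Sb| ≤ |f| + ε * |Sb| := by
      calc |f - ε * Sb| ≤ |f| + |ε * Sb| := abs_sub f (ε * Sb)
        _ = |f| + ε * |Sb| := by rw [abs_mul, abs_of_pos hε]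
    have h3 : |f - ε * Sb| * a j ≤ (|f| + ε * |Sb|) * a j :=
      mul_le_mul_of_nonneg_right h1 (ha j).le
    have t3 : ε * Sa ≤ ε * |Sa| := mul_le_mul_of_nonneg_left (le_abs_self Sa) hε.le
    have h4 : (e - ε * |Sa|) * |b j| ≤ (e - ε * Sa) * |b j| :=
      mul_le_mul_of_nonneg_right (by linarith) (abs_nonneg _)
    nlinarith [h3, h4, hC1]
  clear_value Sa Sb δ C ε
  -- the coefficients
  set E : ℚ := (e - ε * Sa) / a j with hEdef
  set F : ℚ := (f - ε * Sb) / b j with hFdef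
  have hEpos : 0 < E := div_pos (by linarith) (ha j)
  have hFabs : |F| < E := by
    rw [hFdef, abs_div]
    rw [div_lt_div_iff₀ habj (ha j)]
    calc |f - ε * Sb| * a j < (e - ε * Sa) * |b j| := key
      _ = (e - ε * Sa) * |b j| := rfl
  set qj : ℚ := (E + F) / 2 with hqjdef
  set s : ℚ := Nq * (E - F) / 2 with hsdef
  have hqj : 0 < qj := by
    obtain ⟨h1, h2⟩ := abs_lt.mp hFabs
    rw [hqjdef]; linarith
  have hs : 0 < s := by
    rw [hsdef]
    have := abs_lt.mp hFabs
    have h1 : 0 < E - F := by linarith [le_abs_self F]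
    positivity
  clear_value E F
  set q : Fin n → ℚ := fun i => if i = j then qj else ε with hqdef
  have hq : ∀ i, 0 < q i := by
    intro i
    rw [hqdef]
    by_cases h : i = j <;> simp [h, hqj, hε]
  -- the rational identities
  have haj' : a j ≠ 0 := (ha j).ne'
  have hNq' : Nq ≠ 0 := hNqpos.ne'
  have hsum_a : ∑ i, q i * a i = qj * a j + ε * Sa := by
    rw [← Finset.add_sum_erase _ _ (Finset.mem_univ j)]
    congr 1
    · rw [hqdef]; simp
    · rw [hSadef, Finset.mul_sum]
      apply Finset.sum_congr rfl
      intro i hi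
      rw [hqdef]; simp [Finset.ne_of_mem_erase hi]
  have hsum_b : ∑ i, q i * b i = qj * b j + ε * Sb := by
    rw [← Finset.add_sum_erase _ _ (Finset.mem_univ j)]
    congr 1
    · rw [hqdef]; simp
    · rw [hSbdef, Finset.mul_sum]
      apply Finset.sum_congr rfl
      intro i hi
      rw [hqdef]; simp [Finset.ne_of_mem_erase hi]
  have hA : ∑ i, q i * a i + s * (a j / Nq) = e := by
    rw [hsum_a, hsdef, hqjdef, hEdef, hFdef]
    field_simp
    ring
  have hB : ∑ i, q i * b i - s * (b j / Nq) = f := by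
    rw [hsum_b, hsdef, hqjdef, hEdef, hFdef]
    field_simp
    ring
  -- the real identity
  have hXj' : X j ≠ 0 := (hXpos j).ne'
  have hinv : 1 / X j = (((a j:ℚ):ℝ) - ((b j:ℚ):ℝ) * Real.sqrt p) / ((Nq:ℚ):ℝ) := by
    rw [eq_div_iff (by exact_mod_cast hNq' : ((Nq:ℚ):ℝ) ≠ 0), hNqR]
    field_simp
  have hzsum : (∑ i, (q i : ℝ) * X i) + (s : ℝ) * (1 / X j) = z := by
    have h1 : ∀ i ∈ Finset.univ, (q i : ℝ) * X i
        = ((q i * a i : ℚ) : ℝ) + ((q i * b i : ℚ) : ℝ) * Real.sqrt p := by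
      intro i _
      rw [hX i]; push_cast; ring
    rw [Finset.sum_congr rfl h1, Finset.sum_add_distrib, ← Finset.sum_mul, hinv, hz]
    have hA' := congrArg (fun t : ℚ => (t : ℝ)) hA
    have hB' := congrArg (fun t : ℚ => (t : ℝ)) hB
    push_cast at hA' hB' ⊢
    linear_combination hA' + Real.sqrt p * hB'
  -- assembling the strips
  set g : Fin (n+1) → Fin n := fun i => if h : (i:ℕ) < n then ⟨i, h⟩ else j with hgdef
  set d : Fin (n+1) → ℝ := fun i => if h : (i:ℕ) < n then (q ⟨i, h⟩ : ℝ) * X ⟨i, h⟩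
    else (s : ℝ) * (1 / X j) with hddef
  have hd : ∀ i, 0 < d i := by
    intro i
    by_cases h : (i:ℕ) < n
    · simp only [hddef, dif_pos h]
      have := hq ⟨i, h⟩
      have h2 := hXpos ⟨i, h⟩
      positivity
    · simp only [hddef, dif_neg h]
      have := hXpos j
      positivity
  have H : ∀ i, ∃ T : RectTiling (d i), 0 < T.m ∧ ∀ k, rQ (X (g i)) (T.w k) (T.h k) := by
    intro i
    by_cases h : (i:ℕ) < n
    · have hgi : g i = ⟨i, h⟩ := by simp only [hgdef, dif_pos h]
      have hdi : d i = (q ⟨i, h⟩ : ℝ) * X ⟨i, h⟩ := by simp only [hddef, dif_pos h]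
      rw [hgi]
      exact cast_ex hdi.symm (grid_ex (X ⟨i, h⟩) (hXpos _) (q ⟨i, h⟩) (hq _))
    · have h0 : 0 < 1 / X j := by have := hXpos j; positivity
      obtain ⟨T, hm, hQ⟩ := grid_ex (1 / X j) h0 s hs
      have hgi : g i = j := by simp only [hgdef, dif_neg h]
      have hdi : d i = (s : ℝ) * (1 / X j) := by simp only [hddef, dif_neg h]
      rw [hgi]
      exact cast_ex hdi.symm ⟨T, hm, fun k => rQ_one_div (hXpos j) (T.w_pos k) (T.h_pos k) (hQ k)⟩
  obtain ⟨T, Tall, Twit⟩ := stack_family n d (fun i => rQ (X (g i))) hd H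
  have hsumd : ∑ i, d i = z := by
    rw [Fin.sum_univ_castSucc]
    have h1 : ∀ i : Fin n, d i.castSucc = (q i : ℝ) * X i := by
      intro i
      simp only [hddef, Fin.coe_castSucc, dif_pos i.isLt, Fin.eta]
    have h2 : d (Fin.last n) = (s : ℝ) * (1 / X j) := by
      simp only [hddef, Fin.val_last, dif_neg (lt_irrefl n)]
    rw [h2, Finset.sum_congr rfl (fun i _ => h1 i)]
    exact hzsum
  rw [show z = ∑ i, d i from hsumd.symm]
  refine ⟨T, fun k => ?_, fun i => ?_⟩
  · obtain ⟨i, hi⟩ := Tall k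
    exact ⟨g i, hi⟩
  · have hlt : (i : ℕ) < n := i.isLt
    obtain ⟨k, hk⟩ := Twit (Fin.castSucc i)
    refine ⟨k, ?_⟩
    have : g (Fin.castSucc i) = i := by
      simp only [hgdef, Fin.coe_castSucc, dif_pos hlt, Fin.eta]
    rwa [this] at hk
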